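/- Let α, β : ℝ → ℝ be twice differentiable at z ∈ ℝ and define ψ : ℝ → ℂ by ψ(x) = exp(α(x) + i·β(x)). Then (|ψ'(z)|² − Re(ψ''(z) · conj(ψ(z))))/2 = (β'(z)² − α''(z)/2) · exp(2·α(z)). Consequently the conditioned second-moment weak value ⟨C Q̂²⟩/⟨C⟩ = β'² − α''/2 is strictly smaller than (⟨C Q̂⟩/⟨C⟩)² = β'² exactly when α''(z) > 0, i.e. when the amplitude is log-convex at z, violating the objective-realism inequality. -/

import Mathlib

lemma aux_deriv (α β α' β' : ℝ → ℝ)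
    (hα : ∀ x, HasDerivAt α (α' x) x) (hβ : ∀ x, HasDerivAt β (β' x) x) :
    ∀ x, HasDerivAt (fun x : ℝ => Complex.exp ((α x : ℂ) + Complex.I * (β x : ℂ)))
      (Complex.exp ((α x : ℂ) + Complex.I * (β x : ℂ)) * ((α' x : ℂ) + Complex.I * (β' x : ℂ))) x := by
  intro x
  have hg : HasDerivAt (fun x : ℝ => (α x : ℂ) + Complex.I * (β x : ℂ))
      ((α' x : ℂ) + Complex.I * (β' x : ℂ)) x :=
    ((hα x).ofReal_comp).add (((hβ x).ofReal_comp).const_mul Complex.I)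
  exact hg.cexp

/-- Second-moment weak-value identity: for `ψ = e^{α + iβ}` with `α`, `β` twice
differentiable at `z`, `(|ψ'(z)|² − Re(ψ''(z)·conj(ψ(z))))/2 = (β'(z)² − α''(z)/2)·e^{2α(z)}`;
consequently the conditioned second moment `β'² − α''/2` is strictly smaller than the squared
conditioned first moment `β'²` exactly when `α''(z) > 0` (log-convex amplitude). -/
theorem stmt_14 (α β α' β' : ℝ → ℝ) (z a'' b'' : ℝ)
    (hα : ∀ x, HasDerivAt α (α' x) x) (hβ : ∀ x, HasDerivAt β (β' x) x)
    (hα' : HasDerivAt α' a'' z) (hβ' : HasDerivAt β' b'' z) :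
    (‖deriv (fun x : ℝ => Complex.exp ((α x : ℂ) + Complex.I * (β x : ℂ))) z‖ ^ 2
      - (deriv (deriv (fun x : ℝ => Complex.exp ((α x : ℂ) + Complex.I * (β x : ℂ)))) z *
          (starRingEnd ℂ) (Complex.exp ((α z : ℂ) + Complex.I * (β z : ℂ)))).re) / 2
      = (β' z ^ 2 - a'' / 2) * Real.exp (2 * α z) ∧
    (β' z ^ 2 - a'' / 2 < β' z ^ 2 ↔ 0 < a'') := by
  have hd := aux_deriv α β α' β' hα hβ
  have hderiv : deriv (fun x : ℝ => Complex.exp ((α x : ℂ) + Complex.I * (β x : ℂ)))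
      = fun x => Complex.exp ((α x : ℂ) + Complex.I * (β x : ℂ)) * ((α' x : ℂ) + Complex.I * (β' x : ℂ)) := by
    funext x; exact (hd x).deriv
  have hg' : HasDerivAt (fun x : ℝ => (α' x : ℂ) + Complex.I * (β' x : ℂ))
      ((a'' : ℂ) + Complex.I * (b'' : ℂ)) z :=
    (hα'.ofReal_comp).add ((hβ'.ofReal_comp).const_mul Complex.I)
  have hd2 : HasDerivAt (fun x => Complex.exp ((α x : ℂ) + Complex.I * (β x : ℂ)) * ((α' x : ℂ) + Complex.I * (β' x : ℂ)))
      (Complex.exp ((α z : ℂ) + Complex.I * (β z : ℂ)) * ((α' z : ℂ) + Complex.I * (β' z : ℂ)) * ((α' z : ℂ) + Complex.I * (β' z : ℂ))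
        + Complex.exp ((α z : ℂ) + Complex.I * (β z : ℂ)) * ((a'' : ℂ) + Complex.I * (b'' : ℂ))) z :=
    (hd z).mul hg'
  rw [hderiv]
  have hderiv2 := hd2.deriv
  rw [hderiv2]
  constructor
  · set w : ℂ := (α z : ℂ) + Complex.I * (β z : ℂ) with hw
    set g : ℂ := (α' z : ℂ) + Complex.I * (β' z : ℂ) with hg
    have hE : Complex.exp w * (starRingEnd ℂ) (Complex.exp w) = (Real.exp (2 * α z) : ℂ) := by
      rw [Complex.mul_conj]
      rw [show Complex.normSq (Complex.exp w) = ‖Complex.exp w‖ ^ 2 from (Complex.sq_norm _).symm]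
      rw [Complex.norm_exp]
      have : w.re = α z := by simp [hw]
      rw [this]
      norm_cast
      rw [sq, ← Real.exp_add]
      ring_nf
    have habs : ‖Complex.exp w * g‖ ^ 2 = Real.exp (2 * α z) * (α' z ^ 2 + β' z ^ 2) := by
      rw [norm_mul, mul_pow, Complex.norm_exp, Complex.sq_norm]
      have : w.re = α z := by simp [hw]
      rw [this, sq, ← Real.exp_add]
      simp only [hg, Complex.normSq_apply, Complex.add_re, Complex.add_im, Complex.mul_re,
        Complex.mul_im, Complex.ofReal_re, Complex.ofReal_im, Complex.I_re, Complex.I_im]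
      ring_nf
    have hre : ((Complex.exp w * g * g + Complex.exp w * ((a'' : ℂ) + Complex.I * (b'' : ℂ))) *
        (starRingEnd ℂ) (Complex.exp w)).re
        = Real.exp (2 * α z) * (α' z ^ 2 - β' z ^ 2 + a'') := by
      have : (Complex.exp w * g * g + Complex.exp w * ((a'' : ℂ) + Complex.I * (b'' : ℂ))) *
          (starRingEnd ℂ) (Complex.exp w)
          = (Real.exp (2 * α z) : ℂ) * (g * g + ((a'' : ℂ) + Complex.I * (b'' : ℂ))) := by
        rw [← hE]; ring
      rw [this]
      simp only [hg, Complex.mul_re, Complex.mul_im, Complex.add_re, Complex.add_im,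
        Complex.ofReal_re, Complex.ofReal_im, Complex.I_re, Complex.I_im]
      ring
    rw [habs, hre]
    ring
  · constructor <;> intro h <;> linarith
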